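/- Let n ≥ 1 and let A be a real symmetric (2n)×(2n) matrix (indexed by 1 ≤ i, j ≤ 2n, so A_{ij} = A_{ji}) satisfying A_{ii} + A_{i+n,i+n} = 0 for every 1 ≤ i ≤ n. Then ∑_{i=1}^{2n} ∑_{j=1}^{2n} A_{ij}² ≥ 2·∑_{j=1}^{2n} A_{1j}². (This is the Hessian inequality used in the vanishing theorem for L² harmonic 1-forms on Kähler manifolds, giving |∇ω|² ≥ 2|∇|ω||².) -/

import Mathlib

open Finset

/-- Hessian inequality on Kähler manifolds: if `A` is a symmetric real `2n × 2n` matrix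
(indices `0, …, 2n-1` corresponding to `1, …, 2n`) with `Aᵢᵢ + A_{i+n,i+n} = 0` for every
`i` in the first block, then `∑ᵢ ∑ⱼ Aᵢⱼ² ≥ 2 ∑ⱼ A₁ⱼ²` (the first row is row `0`). -/
theorem kahler_hessian_inequality (n : ℕ) (hn : 1 ≤ n)
    (A : Matrix (Fin (2 * n)) (Fin (2 * n)) ℝ)
    (hsymm : ∀ i j : Fin (2 * n), A i j = A j i)
    (htrace : ∀ i j : Fin (2 * n), (i : ℕ) < n → (j : ℕ) = i + n → A i i + A j j = 0) :
    (2 : ℝ) * ∑ j : Fin (2 * n), (A ⟨0, by omega⟩ j) ^ 2 ≤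
      ∑ i : Fin (2 * n), ∑ j : Fin (2 * n), (A i j) ^ 2 := by
  have h2n : 0 < 2 * n := by omega
  set z : Fin (2 * n) := ⟨0, by omega⟩ with hz
  set k : Fin (2 * n) := ⟨n, by omega⟩ with hk
  have hzk : z ≠ k := by
    simp only [hz, hk, Ne, Fin.mk.injEq]
    omega
  have htr : A z z + A k k = 0 := htrace z k (by simp [hz]; omega) (by simp [hz, hk])
  have hkk : (A k k) ^ 2 = (A z z) ^ 2 := by rw [show A k k = - A z z by linarith, neg_sq]
  have hsplit : ∑ i : Fin (2 * n), ∑ j, (A i j) ^ 2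
      = (∑ j, (A z j) ^ 2) + ∑ i ∈ univ.erase z, ∑ j, (A i j) ^ 2 :=
    (Finset.add_sum_erase univ _ (mem_univ z)).symm
  have hstep : ∀ i ∈ univ.erase z,
      (A i z) ^ 2 + (if i = k then (A k k) ^ 2 else 0) ≤ ∑ j, (A i j) ^ 2 := by
    intro i hi
    by_cases h : i = k
    · subst h
      simp only [if_pos rfl]
      have hsub : ∑ j ∈ ({z, k} : Finset (Fin (2 * n))), (A k j) ^ 2
          ≤ ∑ j, (A k j) ^ 2 :=
        Finset.sum_le_sum_of_subset_of_nonneg (Finset.subset_univ _)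
          (fun j _ _ => sq_nonneg _)
      rwa [Finset.sum_pair hzk] at hsub
    · simp only [if_neg h, add_zero]
      exact Finset.single_le_sum (fun j _ => sq_nonneg (A i j)) (mem_univ z)
  have h1 : ∑ i ∈ univ.erase z, ((A i z) ^ 2 + (if i = k then (A k k) ^ 2 else 0))
      ≤ ∑ i ∈ univ.erase z, ∑ j, (A i j) ^ 2 := Finset.sum_le_sum hstep
  have hif : ∑ i ∈ univ.erase z, (if i = k then (A k k) ^ 2 else 0) = (A k k) ^ 2 := by
    rw [Finset.sum_ite_eq' (univ.erase z) k (fun _ => (A k k) ^ 2)]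
    simp [Finset.mem_erase, hzk.symm]
  have hcolfull : ∑ i : Fin (2 * n), (A i z) ^ 2
      = (A z z) ^ 2 + ∑ i ∈ univ.erase z, (A i z) ^ 2 :=
    (Finset.add_sum_erase univ _ (mem_univ z)).symm
  have hc : ∑ i : Fin (2 * n), (A i z) ^ 2 = ∑ i, (A z i) ^ 2 :=
    Finset.sum_congr rfl (fun i _ => by rw [hsymm])
  have hdistrib : ∑ i ∈ univ.erase z, ((A i z) ^ 2 + (if i = k then (A k k) ^ 2 else 0))
      = (∑ i ∈ univ.erase z, (A i z) ^ 2)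
        + ∑ i ∈ univ.erase z, (if i = k then (A k k) ^ 2 else 0) :=
    Finset.sum_add_distrib
  rw [hsplit]
  rw [hdistrib, hif] at h1
  linarith [h1, hcolfull, hc, hkk]
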